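/- arXiv:2307.09735 — 4 statements merged into one kernel-verified Lean document; each statement's English description precedes it below -/
import Mathlib

section
/- The compression-and-randomisation cipher is perfect: for every message m ∈ M with P(m) > 0 and every ciphertext e ∈ {0,1}^l with P(E = e) > 0, the posterior equals the prior, i.e. P(message = m | E = e) = P(m). -/
open Finset

/-- The compression-and-randomisation cipher. -/
def encrypt {l : ℕ} (x : List Bool) (k r : Fin l → Bool) : Fin l → Bool :=
  fun i => if h : (i : ℕ) < x.length then Bool.xor (x.get ⟨i, h⟩) (k i) else r i

lemma card_encrypt {l : ℕ} (x : List Bool) (e : Fin l → Bool) :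
    (univ.filter (fun kr : (Fin l → Bool) × (Fin l → Bool) =>
      encrypt x kr.1 kr.2 = e)).card = 2 ^ l := by
  have : (univ.filter (fun kr : (Fin l → Bool) × (Fin l → Bool) =>
      encrypt x kr.1 kr.2 = e)).card = (univ : Finset (Fin l → Bool)).card := by
    apply Finset.card_bij' (i := fun kr _ => fun i : Fin l =>
        if (i : ℕ) < x.length then kr.2 i else kr.1 i)
      (j := fun s _ =>
        (fun i : Fin l => if h : (i : ℕ) < x.length then Bool.xor (x.get ⟨i, h⟩) (e i) else s i,
         fun i : Fin l => if (i : ℕ) < x.length then s i else e i))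
    · intro kr hkr
      simp
    · intro s _
      simp only [mem_filter, mem_univ, true_and]
      funext i
      simp only [encrypt]
      by_cases h : (i : ℕ) < x.length
      · simp [h, Bool.xor_assoc]
      · simp [h]
    · intro kr hkr
      simp only [mem_filter, mem_univ, true_and] at hkr
      have hk : ∀ (i : Fin l) (h : (i : ℕ) < x.length), kr.1 i = Bool.xor (x.get ⟨i, h⟩) (e i) := by
        intro i h
        have := congrFun hkr i
        simp only [encrypt, h, dif_pos] at this
        rw [← this]
        cases x.get ⟨i, h⟩ <;> cases kr.1 i <;> simp
      have hr : ∀ i : Fin l, ¬ (i : ℕ) < x.length → kr.2 i = e i := by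
        intro i h
        have := congrFun hkr i
        simpa [encrypt, h] using this
      ext i <;> by_cases h : (i : ℕ) < x.length <;>
        simp [h, hk i, hr i]
    · intro s _
      funext i
      by_cases h : (i : ℕ) < x.length <;> simp [h]
  rw [this]
  simp [Finset.card_univ]

/-- Perfect secrecy: for every message `m` with `P(m) > 0` and every ciphertext
`e` with `P(E = e) > 0`, the posterior `P(m | e)` (joint over marginal) equals
the prior `P(m)`. -/
theorem perfect_secrecy
    {M : Type*} [Fintype M] [Nonempty M]
    (P : M → ℝ) (hP0 : ∀ m, 0 ≤ P m) (hP1 : ∑ m, P m = 1)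
    (φ : M → List Bool) (hinj : Function.Injective φ)
    (hpf : ∀ m m', m ≠ m' → ¬ (φ m <+: φ m'))
    (l : ℕ) (hl : ∀ m, (φ m).length ≤ l) (hmax : ∃ m, (φ m).length = l)
    (m : M) (e : Fin l → Bool)
    (hm : 0 < P m)
    (he : 0 < ∑ m', P m' *
      (((univ.filter (fun kr : (Fin l → Bool) × (Fin l → Bool) =>
          encrypt (φ m') kr.1 kr.2 = e)).card : ℝ) / ((2 ^ l) * (2 ^ l)))) :
    (P m * (((univ.filter (fun kr : (Fin l → Bool) × (Fin l → Bool) =>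
          encrypt (φ m) kr.1 kr.2 = e)).card : ℝ) / ((2 ^ l) * (2 ^ l)))) /
      (∑ m', P m' *
        (((univ.filter (fun kr : (Fin l → Bool) × (Fin l → Bool) =>
            encrypt (φ m') kr.1 kr.2 = e)).card : ℝ) / ((2 ^ l) * (2 ^ l)))) =
      P m := by
  have hc : ∀ m' : M, ((univ.filter (fun kr : (Fin l → Bool) × (Fin l → Bool) =>
      encrypt (φ m') kr.1 kr.2 = e)).card : ℝ) = (2 : ℝ) ^ l := by
    intro m'; rw [card_encrypt]; push_cast; ring
  simp only [hc]
  rw [← Finset.sum_mul, hP1, one_mul]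
  have hpos : (0 : ℝ) < (2 : ℝ) ^ l / (2 ^ l * 2 ^ l) := by positivity
  field_simp
end

section
/- If λ is a Huffman (average-length-optimal prefix-free) code for distribution P on M, so that its average length is less than H(P) + 1, then the trimmed code λ^tr is a prefix-free code with maximal codeword length at most ⌈log₂ L⌉ + 1 and average codeword length less than H(P) + 2. -/
open Finset

/-- The `t`-bit binary representation of `i` (as a list of `t` bits). -/
def binRep (t i : ℕ) : List Bool := List.ofFn (fun j : Fin t => i.testBit j)

/-- The trimmed code `λ^tr`: keep `0 · λ(m_i)` when `|λ(m_i)| ≤ ⌈log₂ L⌉`,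
otherwise replace it by `1 · bin_{⌈log₂ L⌉}(i)`. -/
def trimmed {L : ℕ} (lam : Fin L → List Bool) : Fin L → List Bool :=
  fun i =>
    if (lam i).length ≤ Nat.clog 2 L then false :: lam i
    else true :: binRep (Nat.clog 2 L) (i : ℕ)

lemma binRep_length (t i : ℕ) : (binRep t i).length = t := by
  simp [binRep]

lemma binRep_inj {t i j : ℕ} (hi : i < 2 ^ t) (hj : j < 2 ^ t)
    (h : binRep t i = binRep t j) : i = j := by
  rw [binRep, binRep, List.ofFn_inj] at h
  apply Nat.eq_of_testBit_eq
  intro k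
  by_cases hk : k < t
  · exact congrFun h ⟨k, hk⟩
  · rw [Nat.testBit_lt_two_pow (lt_of_lt_of_le hi (Nat.pow_le_pow_right (by norm_num) (le_of_not_gt hk))),
      Nat.testBit_lt_two_pow (lt_of_lt_of_le hj (Nat.pow_le_pow_right (by norm_num) (le_of_not_gt hk)))]

/-- If `λ` is an (e.g. Huffman) prefix-free code with average length below
`H(P) + 1`, then the trimmed code `λ^tr` is prefix-free, has maximal codeword
length at most `⌈log₂ L⌉ + 1`, and average length below `H(P) + 2`. -/
theorem trimmed_of_huffman {L : ℕ} (hL : 1 ≤ L)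
    (lam : Fin L → List Bool) (hinj : Function.Injective lam)
    (hpf : ∀ i j : Fin L, i ≠ j → ¬ (lam i <+: lam j))
    (P : Fin L → ℝ) (hP0 : ∀ i, 0 ≤ P i) (hP1 : ∑ i, P i = 1)
    (havg : ∑ i, P i * ((lam i).length : ℝ) <
      (-∑ i, P i * Real.logb 2 (P i)) + 1) :
    (∀ i j : Fin L, i ≠ j → ¬ (trimmed lam i <+: trimmed lam j)) ∧
    (∀ i : Fin L, (trimmed lam i).length ≤ Nat.clog 2 L + 1) ∧
    ∑ i, P i * ((trimmed lam i).length : ℝ) <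
      (-∑ i, P i * Real.logb 2 (P i)) + 2 := by
  have hLpow : L ≤ 2 ^ Nat.clog 2 L := Nat.le_pow_clog (by norm_num) L
  refine ⟨?_, ?_, ?_⟩
  · intro i j hij hpre
    unfold trimmed at hpre
    by_cases hi : (lam i).length ≤ Nat.clog 2 L <;>
      by_cases hj : (lam j).length ≤ Nat.clog 2 L <;>
      simp [hi, hj, List.cons_prefix_cons] at hpre
    · exact hpf i j hij hpre
    · have hlen : (binRep (Nat.clog 2 L) (i : ℕ)).length
          = (binRep (Nat.clog 2 L) (j : ℕ)).length := by
        rw [binRep_length, binRep_length]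
      have heq := List.IsPrefix.eq_of_length hpre hlen
      have := binRep_inj (lt_of_lt_of_le i.isLt hLpow) (lt_of_lt_of_le j.isLt hLpow) heq
      exact hij (Fin.ext this)
  · intro i
    unfold trimmed
    by_cases hi : (lam i).length ≤ Nat.clog 2 L
    · simp [hi]
    · simp [hi, binRep_length]
  · have key : ∀ i : Fin L, ((trimmed lam i).length : ℝ) ≤ ((lam i).length : ℝ) + 1 := by
      intro i
      unfold trimmed
      by_cases hi : (lam i).length ≤ Nat.clog 2 L
      · simp [hi]
      · simp only [trimmed, if_neg hi, List.length_cons, binRep_length]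
        have h2 : Nat.clog 2 L < (lam i).length := not_le.mp hi
        have h3 : (Nat.clog 2 L : ℝ) < ((lam i).length : ℝ) := by exact_mod_cast h2
        push_cast
        linarith
    calc ∑ i, P i * ((trimmed lam i).length : ℝ)
        ≤ ∑ i, P i * (((lam i).length : ℝ) + 1) := by
          apply Finset.sum_le_sum
          intro i _
          exact mul_le_mul_of_nonneg_left (key i) (hP0 i)
      _ = (∑ i, P i * ((lam i).length : ℝ)) + 1 := by
          simp only [mul_add, mul_one, Finset.sum_add_distrib, hP1]
      _ < (-∑ i, P i * Real.logb 2 (P i)) + 2 := by linarith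
end

section
/- Kraft inequality for the trimmed code: Σ_{i=1}^L 2^{−|λ^tr(m_i)|} ≤ 1. -/
open Finset

/-- Kraft inequality for the trimmed code. -/
theorem trimmed_kraft {L : ℕ} (hL : 1 ≤ L)
    (lam : Fin L → List Bool) (hinj : Function.Injective lam)
    (hpf : ∀ i j : Fin L, i ≠ j → ¬ (lam i <+: lam j))
    (hkraft : ∑ i, (2 : ℝ) ^ (-((lam i).length : ℤ)) ≤ 1) :
    ∑ i, (2 : ℝ) ^ (-((trimmed lam i).length : ℤ)) ≤ 1 := by
  set t := Nat.clog 2 L with ht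
  have hLt : (L : ℝ) ≤ 2 ^ t := by
    exact_mod_cast Nat.le_pow_clog (by norm_num) L
  have hstep : ∀ i : Fin L,
      (2 : ℝ) ^ (-((trimmed lam i).length : ℤ)) ≤
        (2 : ℝ) ^ (-((lam i).length : ℤ)) * 2⁻¹ + (2 : ℝ) ^ (-(t : ℤ)) * 2⁻¹ := by
    intro i
    unfold trimmed
    split_ifs with h
    · have : ((false :: lam i).length : ℤ) = (lam i).length + 1 := by
        simp [List.length_cons]
      rw [this, neg_add, zpow_add₀ (by norm_num : (2:ℝ) ≠ 0)]
      have h2 : (0:ℝ) ≤ (2 : ℝ) ^ (-(t : ℤ)) * 2⁻¹ := by positivity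
      simp only [zpow_neg_one] at *
      linarith
    · have hlen : ((true :: binRep t (i : ℕ)).length : ℤ) = (t : ℤ) + 1 := by
        simp [binRep, List.length_cons]
      rw [hlen, neg_add, zpow_add₀ (by norm_num : (2:ℝ) ≠ 0)]
      have h2 : (0:ℝ) ≤ (2 : ℝ) ^ (-((lam i).length : ℤ)) * 2⁻¹ := by positivity
      simp only [zpow_neg_one] at *
      linarith
  calc ∑ i, (2 : ℝ) ^ (-((trimmed lam i).length : ℤ))
      ≤ ∑ i : Fin L, ((2 : ℝ) ^ (-((lam i).length : ℤ)) * 2⁻¹ + (2 : ℝ) ^ (-(t : ℤ)) * 2⁻¹) :=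
        Finset.sum_le_sum fun i _ => hstep i
    _ = (∑ i, (2 : ℝ) ^ (-((lam i).length : ℤ))) * 2⁻¹ + (L : ℝ) * ((2 : ℝ) ^ (-(t : ℤ)) * 2⁻¹) := by
        rw [Finset.sum_add_distrib, ← Finset.sum_mul, Finset.sum_const, Finset.card_univ,
          Fintype.card_fin, nsmul_eq_mul]
    _ ≤ 1 * 2⁻¹ + (2 : ℝ) ^ t * ((2 : ℝ) ^ (-(t : ℤ)) * 2⁻¹) := by
        have hpos : (0:ℝ) ≤ (2 : ℝ) ^ (-(t : ℤ)) * 2⁻¹ := by positivity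
        gcongr
    _ = 1 := by
        rw [← zpow_natCast (2:ℝ) t, ← mul_assoc, ← zpow_add₀ (by norm_num : (2:ℝ) ≠ 0)]
        norm_num
end

section
/- Length leakage of naive compress-then-pad without padding: if φ is injective and two messages m₁, m₂ satisfy |φ(m₁)| ≠ |φ(m₂)|, then the cipher that outputs φ(m) XOR (key of length |φ(m)|) without padding is not perfect: there exists a ciphertext e such that P(M' = m₁ | E = e) ≠ P(M' = m₁), assuming 0 < P(m₁) and 0 < P(m₂). -/
open Finset

/-- The naive compress-then-pad cipher without padding: XOR the codeword `x`
with a key of length exactly `|x|`. -/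
def encryptNP (x : List Bool) (k : Fin x.length → Bool) : List Bool :=
  List.ofFn (fun i => Bool.xor (x.get i) (k i))

/-- The joint probability `P(M' = m, E = e)` for the unpadded cipher: the key
is uniform on `{0,1}^{|φ(m)|}`. -/
noncomputable def pJointNP {M : Type*} [Fintype M]
    (P : M → ℝ) (φ : M → List Bool) (m : M) (e : List Bool) : ℝ :=
  P m * (((univ.filter (fun k : Fin (φ m).length → Bool =>
      encryptNP (φ m) k = e)).card : ℝ) / 2 ^ (φ m).length)

lemma pJointNP_nonneg {M : Type*} [Fintype M]
    (P : M → ℝ) (hP0 : ∀ m, 0 ≤ P m) (φ : M → List Bool) (m : M) (e : List Bool) :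
    0 ≤ pJointNP P φ m e := by
  unfold pJointNP
  exact mul_nonneg (hP0 m) (by positivity)

/-- Length leakage: if two messages of positive probability have codewords of
different lengths, then compress-then-XOR without padding is not perfect: some
ciphertext of positive probability changes the posterior of `m₁`. -/
theorem no_padding_not_perfect
    {M : Type*} [Fintype M]
    (P : M → ℝ) (hP0 : ∀ m, 0 ≤ P m) (hP1 : ∑ m, P m = 1)
    (φ : M → List Bool) (hinj : Function.Injective φ)
    (m₁ m₂ : M) (hm₁ : 0 < P m₁) (hm₂ : 0 < P m₂)
    (hlen : (φ m₁).length ≠ (φ m₂).length) :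
    ∃ e : List Bool,
      0 < (∑ m, pJointNP P φ m e) ∧
      (pJointNP P φ m₁ e) / (∑ m, pJointNP P φ m e) ≠ P m₁ := by
  refine ⟨φ m₂, ?_, ?_⟩
  · -- the m₂ term is positive, all terms nonneg
    have hpos : 0 < pJointNP P φ m₂ (φ m₂) := by
      have hk : encryptNP (φ m₂) (fun _ => false) = φ m₂ := by
        unfold encryptNP
        simp [List.ofFn_getElem]
      have hcard : 0 < ((univ.filter (fun k : Fin (φ m₂).length → Bool =>
          encryptNP (φ m₂) k = φ m₂)).card : ℝ) := by
        have : (fun _ => false : Fin (φ m₂).length → Bool) ∈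
            univ.filter (fun k => encryptNP (φ m₂) k = φ m₂) := by
          simp [hk]
        exact_mod_cast Finset.card_pos.mpr ⟨_, this⟩
      unfold pJointNP
      positivity
    calc (0:ℝ) < pJointNP P φ m₂ (φ m₂) := hpos
      _ ≤ ∑ m, pJointNP P φ m (φ m₂) :=
        Finset.single_le_sum (fun m _ => pJointNP_nonneg P hP0 φ m (φ m₂)) (mem_univ m₂)
  · -- numerator is zero since lengths differ
    have hzero : pJointNP P φ m₁ (φ m₂) = 0 := by
      unfold pJointNP
      have : (univ.filter (fun k : Fin (φ m₁).length → Bool =>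
          encryptNP (φ m₁) k = φ m₂)) = ∅ := by
        refine Finset.filter_false_of_mem fun k _ h => ?_
        apply hlen
        have := congrArg List.length h
        simpa [encryptNP] using this
      simp [this]
    rw [hzero]
    simp only [zero_div]
    exact fun h => absurd h.symm (ne_of_gt hm₁)
end
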